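/- For ψ_L(n) = √(2 ln ln n + 3 ln ln ln n), the integral ∫_{λ₀}^∞ ψ_L(λ)e^{-ψ_L(λ)²/2} dλ/λ diverges (where λ₀ is large enough that all iterated logarithms are positive). -/
import Mathlib

open Real MeasureTheory Set

theorem psiL_integral_infinite (lam₀ : ℝ)
    (h : ∀ x ∈ Set.Ici lam₀, 0 < Real.log (Real.log (Real.log x))) :
    ¬ MeasureTheory.IntegrableOn
      (fun lam : ℝ =>
        Real.sqrt (2 * Real.log (Real.log lam) + 3 * Real.log (Real.log (Real.log lam))) *
          Real.exp (-(Real.sqrt (2 * Real.log (Real.log lam) +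
            3 * Real.log (Real.log (Real.log lam)))) ^ 2 / 2) / lam)
      (Set.Ici lam₀) := by
  intro hI
  set F : ℝ → ℝ := fun lam : ℝ =>
        Real.sqrt (2 * Real.log (Real.log lam) + 3 * Real.log (Real.log (Real.log lam))) *
          Real.exp (-(Real.sqrt (2 * Real.log (Real.log lam) +
            3 * Real.log (Real.log (Real.log lam)))) ^ 2 / 2) / lam with hF
  set f : ℝ → ℝ := fun x => (x * Real.log x * Real.log (Real.log x))⁻¹ with hf
  -- lam₀ > e^e
  have h1e : (1 : ℝ) < Real.exp 1 := by
    have := Real.exp_one_gt_d9; linarith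
  have ha : Real.exp (Real.exp 1) < lam₀ := by
    by_contra hle
    push_neg at hle
    have h0 := h (Real.exp (Real.exp 1)) hle
    rw [Real.log_exp, Real.log_exp, Real.log_one] at h0
    exact lt_irrefl 0 h0
  -- basic facts for x ≥ lam₀
  have facts : ∀ x : ℝ, lam₀ ≤ x →
      0 < x ∧ 1 < Real.log x ∧ 1 < Real.log (Real.log x) := by
    intro x hx
    have hxe : Real.exp (Real.exp 1) < x := lt_of_lt_of_le ha hx
    have hx0 : 0 < x := lt_trans (Real.exp_pos _) hxe
    have hlx1 : Real.exp 1 < Real.log x := by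
      have := Real.log_lt_log (Real.exp_pos _) hxe
      rwa [Real.log_exp] at this
    have hlx : 1 < Real.log x := lt_trans h1e hlx1
    have hL : 1 < Real.log (Real.log x) := by
      have := Real.log_lt_log (Real.exp_pos 1) hlx1
      rwa [Real.log_exp] at this
    exact ⟨hx0, hlx, hL⟩
  -- f is positive on Ici lam₀
  have hfpos : ∀ x : ℝ, lam₀ ≤ x → 0 < f x := by
    intro x hx
    obtain ⟨hx0, hlx, hL⟩ := facts x hx
    have : 0 < x * Real.log x * Real.log (Real.log x) := by positivity
    simpa [hf] using inv_pos.mpr this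
  -- comparison: f ≤ F on Ici lam₀
  have hbound : ∀ x : ℝ, lam₀ ≤ x → f x ≤ F x := by
    intro x hx
    obtain ⟨hx0, hlx, hL⟩ := facts x hx
    have hlx0 : 0 < Real.log x := lt_trans one_pos hlx
    have hL0 : 0 < Real.log (Real.log x) := lt_trans one_pos hL
    have hM : 0 < Real.log (Real.log (Real.log x)) := h x hx
    set lx := Real.log x with hlxdef
    set L := Real.log lx with hLdef
    set M := Real.log L with hMdef
    have ht : (0:ℝ) ≤ 2 * L + 3 * M := by positivity
    have hexp : Real.exp (-(2 * L + 3 * M) / 2) = lx⁻¹ * L ^ (-(3/2) : ℝ) := by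
      rw [show -(2 * L + 3 * M) / 2 = (-L) + M * (-(3/2)) by ring, Real.exp_add,
        Real.exp_neg, Real.exp_log hlx0, Real.rpow_def_of_pos hL0, ← hMdef]
    have hsq : L ^ ((1:ℝ)/2) ≤ Real.sqrt (2 * L + 3 * M) := by
      rw [← Real.sqrt_eq_rpow]
      exact Real.sqrt_le_sqrt (by linarith)
    have hLpow : L ^ ((1:ℝ)/2) * L ^ (-(3/2) : ℝ) = L⁻¹ := by
      rw [← Real.rpow_add hL0, show (1:ℝ)/2 + -(3/2) = -1 by norm_num, Real.rpow_neg_one]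
    have hFx : F x = Real.sqrt (2 * L + 3 * M) * (lx⁻¹ * L ^ (-(3/2) : ℝ)) / x := by
      simp only [hF]
      rw [Real.sq_sqrt ht, hexp]
    rw [hFx]
    have e1 : f x = L ^ ((1:ℝ)/2) * (lx⁻¹ * L ^ (-(3/2) : ℝ)) / x := by
      have : L ^ ((1:ℝ)/2) * (lx⁻¹ * L ^ (-(3/2) : ℝ)) / x
          = (L ^ ((1:ℝ)/2) * L ^ (-(3/2) : ℝ)) * lx⁻¹ * x⁻¹ := by ring
      rw [this, hLpow]
      simp only [hf]
      rw [mul_inv, mul_inv]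
      ring
    rw [e1]
    have hpos1 : (0:ℝ) ≤ lx⁻¹ * L ^ (-(3/2) : ℝ) := by positivity
    gcongr
  -- f is integrable on Ici lam₀ by comparison
  have hfm : AEStronglyMeasurable f (volume.restrict (Set.Ici lam₀)) := by
    refine Measurable.aestronglyMeasurable ?_
    exact ((measurable_id.mul Real.measurable_log).mul
      (Real.measurable_log.comp Real.measurable_log)).inv
  have hfint : IntegrableOn f (Set.Ici lam₀) := by
    refine MeasureTheory.Integrable.mono' hI hfm ?_
    refine (MeasureTheory.ae_restrict_iff' measurableSet_Ici).2 (Filter.Eventually.of_forall ?_)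
    intro x hx
    rw [Real.norm_eq_abs, abs_of_nonneg (hfpos x hx).le]
    exact hbound x hx
  set C := ∫ x in Set.Ici lam₀, f x with hC
  have hC0 : 0 ≤ C := by
    refine MeasureTheory.setIntegral_nonneg measurableSet_Ici ?_
    intro x hx
    exact (hfpos x hx).le
  -- key : the integral over Ioc lam₀ b is g b - g lam₀ ≤ C
  have key : ∀ b : ℝ, lam₀ ≤ b →
      Real.log (Real.log (Real.log b)) - Real.log (Real.log (Real.log lam₀)) ≤ C := by
    intro b hb
    have hderiv : ∀ x ∈ Set.uIcc lam₀ b,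
        HasDerivAt (fun y => Real.log (Real.log (Real.log y))) (f x) x := by
      intro x hx
      rw [Set.uIcc_of_le hb] at hx
      obtain ⟨hx0, hlx, hL⟩ := facts x hx.1
      have hlx0 : 0 < Real.log x := lt_trans one_pos hlx
      have hL0 : 0 < Real.log (Real.log x) := lt_trans one_pos hL
      have h1 : HasDerivAt Real.log x⁻¹ x := Real.hasDerivAt_log (ne_of_gt hx0)
      have h2 : HasDerivAt Real.log (Real.log x)⁻¹ (Real.log x) :=
        Real.hasDerivAt_log (ne_of_gt hlx0)
      have h3 : HasDerivAt Real.log (Real.log (Real.log x))⁻¹ (Real.log (Real.log x)) :=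
        Real.hasDerivAt_log (ne_of_gt hL0)
      have h4 := (h3.comp x (h2.comp x h1))
      have : (Real.log (Real.log x))⁻¹ * ((Real.log x)⁻¹ * x⁻¹) = f x := by
        simp only [hf]
        rw [mul_inv, mul_inv]
        ring
      rw [this] at h4
      exact h4
    have hint : IntervalIntegrable f volume lam₀ b := by
      rw [intervalIntegrable_iff_integrableOn_Ioc_of_le hb]
      exact hfint.mono_set (fun y hy => hy.1.le)
    have heq := intervalIntegral.integral_eq_sub_of_hasDerivAt hderiv hint
    rw [← heq, intervalIntegral.integral_of_le hb]
    refine MeasureTheory.setIntegral_mono_set hfint ?_ ?_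
    · refine (MeasureTheory.ae_restrict_iff' measurableSet_Ici).2 (Filter.Eventually.of_forall ?_)
      intro x hx
      exact (hfpos x hx).le
    · exact HasSubset.Subset.eventuallyLE (fun y hy => hy.1.le)
  -- contradiction: log log log b is unbounded
  set T := Real.log (Real.log (Real.log lam₀)) + C + 1 with hT
  set b := max lam₀ (Real.exp (Real.exp (Real.exp T))) with hb
  have hblam : lam₀ ≤ b := le_max_left _ _
  have hbe : Real.exp (Real.exp (Real.exp T)) ≤ b := le_max_right _ _
  have h1' : Real.exp (Real.exp T) ≤ Real.log b := by
    have := Real.log_le_log (Real.exp_pos _) hbe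
    rwa [Real.log_exp] at this
  have h2' : Real.exp T ≤ Real.log (Real.log b) := by
    have := Real.log_le_log (Real.exp_pos _) h1'
    rwa [Real.log_exp] at this
  have h3' : T ≤ Real.log (Real.log (Real.log b)) := by
    have := Real.log_le_log (Real.exp_pos _) h2'
    rwa [Real.log_exp] at this
  have := key b hblam
  rw [hT] at h3'
  linarith
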